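/- Two-dimensional Rademacher–Menshov inequality: Let K be a positive integer and for k₁,k₂ ∈ {1,...,K} let a_{k₁,k₂} be complex numbers, with the convention a_{k₁,k₂}=0 if k₁=0 or k₂=0. Then for any 1 < r < ∞, the diagonal sequence satisfies ‖(a_{k,k})_{k∈[K]}‖_{V^r} ≲_r Σ_{M₁,M₂∈2^ℕ∩[K]} ‖(Δa_{M₁j₁,M₂j₂})_{(j₁,j₂)∈[K/M₁]×[K/M₂]}‖_{ℓ^r}, where Δa_{M₁j₁,M₂j₂} := a_{M₁j₁,M₂j₂} − a_{M₁(j₁−1),M₂j₂} − a_{M₁j₁,M₂(j₂−1)} + a_{M₁(j₁−1),M₂(j₂−1)}. -/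

import Mathlib

open scoped ENNReal NNReal

/-- The `r`-variation seminorm of a family of complex numbers indexed by a
totally ordered set. -/
noncomputable def vSeminorm {I : Type*} [LinearOrder I] (r : ℝ) (a : I → ℂ) : ℝ≥0∞ :=
  ⨆ (J : ℕ) (t : Fin (J + 1) → I) (_ : Monotone t),
    (∑ j : Fin J, (‖a (t j.succ) - a (t j.castSucc)‖₊ : ℝ≥0∞) ^ r) ^ (1 / r)

/-- The `r`-variation norm: `sup_t |a t|` plus the `r`-variation seminorm. -/
noncomputable def vNorm {I : Type*} [LinearOrder I] (r : ℝ) (a : I → ℂ) : ℝ≥0∞ :=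
  (⨆ t : I, (‖a t‖₊ : ℝ≥0∞)) + vSeminorm r a

/-- The double difference
`Δa_{M₁j₁,M₂j₂} = a_{M₁j₁,M₂j₂} − a_{M₁(j₁−1),M₂j₂} − a_{M₁j₁,M₂(j₂−1)} + a_{M₁(j₁−1),M₂(j₂−1)}`. -/
def doubleDiff (a : ℕ → ℕ → ℂ) (M₁ j₁ M₂ j₂ : ℕ) : ℂ :=
  a (M₁ * j₁) (M₂ * j₂) - a (M₁ * (j₁ - 1)) (M₂ * j₂)
    - a (M₁ * j₁) (M₂ * (j₂ - 1)) + a (M₁ * (j₁ - 1)) (M₂ * (j₂ - 1))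


-- AUX START
open Finset

open Finset

/-- Dyadic decomposition of the interval `(t, t']` into intervals
`(2^i*(j-1), 2^i*j]`, recorded as pairs `(i, j)`. -/
def dyadic : ℕ → ℕ → Finset (ℕ × ℕ)
  | t, t' =>
    if h : t < t' then
      ((if t % 2 = 1 then {(0, t + 1)} else ∅) ∪
        (if t' % 2 = 1 then {(0, t')} else ∅)) ∪
        (dyadic ((t + 1) / 2) (t' / 2)).image (fun p => (p.1 + 1, p.2))
    else ∅
  termination_by t t' => t'
  decreasing_by exact Nat.div_lt_self (by omega) one_lt_two

lemma dyadic_mem : ∀ t' t i j, (i, j) ∈ dyadic t t' →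
    1 ≤ j ∧ t ≤ 2 ^ i * (j - 1) ∧ 2 ^ i * j ≤ t' := by
  intro t'
  induction t' using Nat.strong_induction_on with
  | _ t' IH =>
    intro t i j hm
    rw [dyadic] at hm
    split at hm
    · rename_i hlt
      simp only [Finset.mem_union, Finset.mem_image] at hm
      rcases hm with ((hm | hm) | hm)
      · split at hm
        · simp only [Finset.mem_singleton, Prod.mk.injEq] at hm
          obtain ⟨rfl, rfl⟩ := hm
          simp; omega
        · simp at hm
      · split at hm
        · simp only [Finset.mem_singleton, Prod.mk.injEq] at hm
          obtain ⟨rfl, rfl⟩ := hm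
          simp; omega
        · simp at hm
      · obtain ⟨⟨i', j'⟩, hp, heq⟩ := hm
        simp only [Prod.mk.injEq] at heq
        obtain ⟨rfl, rfl⟩ : i = i' + 1 ∧ j = j' := ⟨heq.1.symm, heq.2.symm⟩
        have h2 := IH (t' / 2) (Nat.div_lt_self (by omega) one_lt_two) ((t + 1) / 2) i' j hp
        obtain ⟨h1, hl, hu⟩ := h2
        refine ⟨h1, ?_, ?_⟩
        · calc t ≤ 2 * ((t + 1) / 2) := by omega
            _ ≤ 2 * (2 ^ i' * (j - 1)) := by omega
            _ = 2 ^ (i' + 1) * (j - 1) := by ring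
        · calc 2 ^ (i' + 1) * j = 2 * (2 ^ i' * j) := by ring
            _ ≤ 2 * (t' / 2) := by omega
            _ ≤ t' := by omega
    · simp at hm

lemma dyadic_card : ∀ t' t i, ((dyadic t t').filter (fun p => p.1 = i)).card ≤ 2 := by
  intro t'
  induction t' using Nat.strong_induction_on with
  | _ t' IH =>
    intro t i
    rw [dyadic]
    split
    · rename_i hlt
      rw [Finset.filter_union, Finset.filter_union]
      refine le_trans (Finset.card_union_le _ _) ?_
      have hAB := Finset.card_union_le
        ((if t % 2 = 1 then ({(0, t+1)} : Finset (ℕ × ℕ)) else ∅).filter (fun p => p.1 = i))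
        ((if t' % 2 = 1 then ({(0, t')} : Finset (ℕ × ℕ)) else ∅).filter (fun p => p.1 = i))
      match i with
      | 0 =>
        have himg : ((dyadic ((t + 1) / 2) (t' / 2)).image
            (fun p : ℕ × ℕ => (p.1 + 1, p.2))).filter (fun p => p.1 = 0) = ∅ := by
          ext ⟨x, y⟩
          simp only [Finset.mem_filter, Finset.mem_image, Finset.notMem_empty, iff_false]
          rintro ⟨⟨p, _, heq⟩, hx⟩
          simp only [Prod.mk.injEq] at heq
          omega
        have c1 : ((if t % 2 = 1 then ({(0, t+1)} : Finset (ℕ × ℕ)) else ∅).filter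
            (fun p => p.1 = 0)).card ≤ 1 := by
          split <;> simp [Finset.filter_singleton] <;> split <;> simp
        have c2 : ((if t' % 2 = 1 then ({(0, t')} : Finset (ℕ × ℕ)) else ∅).filter
            (fun p => p.1 = 0)).card ≤ 1 := by
          split <;> simp [Finset.filter_singleton] <;> split <;> simp
        rw [himg]
        simp only [Finset.card_empty]
        omega
      | i' + 1 =>
        have c1 : ((if t % 2 = 1 then ({(0, t+1)} : Finset (ℕ × ℕ)) else ∅).filter
            (fun p => p.1 = i' + 1)).card = 0 := by
          split <;> simp [Finset.filter_singleton]
        have c2 : ((if t' % 2 = 1 then ({(0, t')} : Finset (ℕ × ℕ)) else ∅).filter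
            (fun p => p.1 = i' + 1)).card = 0 := by
          split <;> simp [Finset.filter_singleton]
        have himg : ((dyadic ((t + 1) / 2) (t' / 2)).image
            (fun p : ℕ × ℕ => (p.1 + 1, p.2))).filter (fun p => p.1 = i' + 1) =
            ((dyadic ((t + 1) / 2) (t' / 2)).filter (fun p => p.1 = i')).image
              (fun p : ℕ × ℕ => (p.1 + 1, p.2)) := by
          ext ⟨x, y⟩
          simp only [Finset.mem_filter, Finset.mem_image, Prod.mk.injEq]
          constructor
          · rintro ⟨⟨p, hp, h1, h2⟩, hx⟩
            exact ⟨p, ⟨hp, by omega⟩, by omega, h2⟩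
          · rintro ⟨p, ⟨hp, hpi⟩, h1, h2⟩
            exact ⟨⟨p, hp, h1, h2⟩, by omega⟩
        rw [himg]
        have hil := Finset.card_image_le
          (s := (dyadic ((t + 1) / 2) (t' / 2)).filter (fun p => p.1 = i'))
          (f := fun p : ℕ × ℕ => (p.1 + 1, p.2))
        have hIH := IH (t' / 2) (Nat.div_lt_self (by omega) one_lt_two) ((t + 1) / 2) i'
        omega
    · simp

lemma dyadic_sum : ∀ t' t, t ≤ t' → ∀ g : ℕ → ℂ,
    ∑ p ∈ dyadic t t', (g (2 ^ p.1 * p.2) - g (2 ^ p.1 * (p.2 - 1))) = g t' - g t := by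
  intro t'
  induction t' using Nat.strong_induction_on with
  | _ t' IH =>
    intro t hle g
    rw [dyadic]
    split
    · rename_i hlt
      have hd1 : Disjoint
          ((if t % 2 = 1 then ({(0, t+1)} : Finset (ℕ × ℕ)) else ∅) ∪
            (if t' % 2 = 1 then ({(0, t')} : Finset (ℕ × ℕ)) else ∅))
          ((dyadic ((t + 1) / 2) (t' / 2)).image (fun p : ℕ × ℕ => (p.1 + 1, p.2))) := by
        rw [Finset.disjoint_left]
        rintro ⟨x, y⟩ hm hm'
        simp only [Finset.mem_image, Prod.mk.injEq] at hm'
        obtain ⟨p, _, h1, _⟩ := hm'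
        simp only [Finset.mem_union] at hm
        rcases hm with h | h <;> [skip; skip] <;>
          · split at h <;> simp_all [Prod.ext_iff] <;> omega
      have hd2 : Disjoint (if t % 2 = 1 then ({(0, t+1)} : Finset (ℕ × ℕ)) else ∅)
          (if t' % 2 = 1 then ({(0, t')} : Finset (ℕ × ℕ)) else ∅) := by
        split <;> split <;> simp_all [Prod.ext_iff] <;> omega
      rw [Finset.sum_union hd1, Finset.sum_union hd2]
      have hinj : Set.InjOn (fun p : ℕ × ℕ => (p.1 + 1, p.2))
          ↑(dyadic ((t + 1) / 2) (t' / 2)) := by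
        intro p _ q _ h
        simp only [Prod.mk.injEq] at h
        exact Prod.ext (by omega) h.2
      rw [Finset.sum_image hinj]
      have hrec : ∑ p ∈ dyadic ((t + 1) / 2) (t' / 2),
          (g (2 ^ (p.1 + 1) * p.2) - g (2 ^ (p.1 + 1) * (p.2 - 1))) =
          g (2 * (t' / 2)) - g (2 * ((t + 1) / 2)) := by
        have := IH (t' / 2) (Nat.div_lt_self (by omega) one_lt_two) ((t + 1) / 2)
          (Nat.div_le_div_right (by omega)) (fun n => g (2 * n))
        rw [← this]
        refine Finset.sum_congr rfl fun p _ => ?_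
        have e1 : 2 ^ (p.1 + 1) * p.2 = 2 * (2 ^ p.1 * p.2) := by ring
        have e2 : 2 ^ (p.1 + 1) * (p.2 - 1) = 2 * (2 ^ p.1 * (p.2 - 1)) := by ring
        rw [e1, e2]
      rw [hrec]
      have hs1 : ∑ p ∈ (if t % 2 = 1 then ({(0, t+1)} : Finset (ℕ × ℕ)) else ∅),
          (g (2 ^ p.1 * p.2) - g (2 ^ p.1 * (p.2 - 1))) =
          if t % 2 = 1 then g (t + 1) - g t else 0 := by
        split <;> simp
      have hs2 : ∑ p ∈ (if t' % 2 = 1 then ({(0, t')} : Finset (ℕ × ℕ)) else ∅),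
          (g (2 ^ p.1 * p.2) - g (2 ^ p.1 * (p.2 - 1))) =
          if t' % 2 = 1 then g t' - g (t' - 1) else 0 := by
        split <;> simp
      rw [hs1, hs2]
      by_cases h1 : t % 2 = 1 <;> by_cases h2 : t' % 2 = 1 <;>
        simp only [h1, h2, if_pos, if_neg, if_true, if_false, reduceIte]
      · have e1 : 2 * (t' / 2) = t' - 1 := by omega
        have e2 : 2 * ((t + 1) / 2) = t + 1 := by omega
        rw [e1, e2]; ring
      · have e1 : 2 * (t' / 2) = t' := by omega
        have e2 : 2 * ((t + 1) / 2) = t + 1 := by omega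
        rw [e1, e2]; ring
      · have e1 : 2 * (t' / 2) = t' - 1 := by omega
        have e2 : 2 * ((t + 1) / 2) = t := by omega
        rw [e1, e2]; ring
      · have e1 : 2 * (t' / 2) = t' := by omega
        have e2 : 2 * ((t + 1) / 2) = t := by omega
        rw [e1, e2]; ring
    · rename_i hnlt
      have : t = t' := by omega
      subst this
      simp

open scoped ENNReal NNReal

section Helpers

variable {r : ℝ}

lemma rpow_rpow_inv (hr : 0 < r) (x : ℝ≥0∞) : (x ^ r) ^ (1 / r) = x := by
  rw [← ENNReal.rpow_mul, mul_one_div_cancel hr.ne', ENNReal.rpow_one]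

lemma rpow_inv_rpow' (hr : 0 < r) (x : ℝ≥0∞) : (x ^ (1 / r)) ^ r = x := by
  rw [← ENNReal.rpow_mul, one_div_mul_cancel hr.ne', ENNReal.rpow_one]

/-- Minkowski inequality for a finite sum of sequences, ℝ≥0∞ version. -/
lemma minkowski_finset {ι κ : Type*} [Fintype κ] (hr : 1 ≤ r) (T : Finset ι)
    (y : ι → κ → ℝ≥0∞) :
    (∑ j : κ, (∑ sc ∈ T, y sc j) ^ r) ^ (1 / r) ≤
      ∑ sc ∈ T, (∑ j : κ, (y sc j) ^ r) ^ (1 / r) := by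
  classical
  induction T using Finset.induction_on with
  | empty =>
    have h0 : (0:ℝ) < r := lt_of_lt_of_le zero_lt_one hr
    simp only [Finset.sum_empty, ENNReal.zero_rpow_of_pos h0, Finset.sum_const_zero,
      ENNReal.zero_rpow_of_pos (show (0:ℝ) < 1 / r by positivity), le_refl]
  | insert _ _ hnotmem ih =>
    rename_i a T'
    simp only [Finset.sum_insert hnotmem]
    calc (∑ j : κ, (y a j + ∑ sc ∈ T', y sc j) ^ r) ^ (1 / r)
        ≤ (∑ j : κ, (y a j) ^ r) ^ (1 / r) +
          (∑ j : κ, (∑ sc ∈ T', y sc j) ^ r) ^ (1 / r) :=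
          ENNReal.Lp_add_le _ _ _ hr
      _ ≤ _ := add_le_add_right ih _

/-- A sum of at most `n` terms is at most `n` times the `ℓ^r` norm. -/
lemma sum_le_card_mul_lpnorm {ι : Type*} (hr : 0 < r) (F : Finset ι) (f : ι → ℝ≥0∞) :
    ∑ s ∈ F, f s ≤ (F.card : ℝ≥0∞) * (∑ s ∈ F, (f s) ^ r) ^ (1 / r) := by
  calc ∑ s ∈ F, f s ≤ ∑ _s ∈ F, (∑ s ∈ F, (f s) ^ r) ^ (1 / r) := by
        refine Finset.sum_le_sum fun s hs => ?_
        conv_lhs => rw [← rpow_rpow_inv hr (f s)]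
        exact ENNReal.rpow_le_rpow (Finset.single_le_sum (f := fun s => (f s) ^ r)
          (fun _ _ => zero_le) hs) (by positivity)
    _ = (F.card : ℝ≥0∞) * (∑ s ∈ F, (f s) ^ r) ^ (1 / r) := by
        rw [Finset.sum_const, nsmul_eq_mul]

end Helpers

section Main

variable (r : ℝ) (K : ℕ) (a : ℕ → ℕ → ℂ)

/-- The double difference at scale pair `sc` with indices `q`. -/
def vdd (a : ℕ → ℕ → ℂ) (sc q : ℕ × ℕ) : ℂ :=
  doubleDiff a (2 ^ sc.1) q.1 (2 ^ sc.2) q.2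

/-- `ℓ^r`-sum of double differences over the full grid at scale pair `sc`. -/
noncomputable def Qsum (sc : ℕ × ℕ) : ℝ≥0∞ :=
  ∑ q ∈ Finset.Icc 1 (K / 2 ^ sc.1) ×ˢ Finset.Icc 1 (K / 2 ^ sc.2),
    (‖vdd a sc q‖₊ : ℝ≥0∞) ^ r

/-- Product of dyadic families restricted to a scale pair. -/
def blockF (A B : Finset (ℕ × ℕ)) (sc : ℕ × ℕ) : Finset ((ℕ × ℕ) × (ℕ × ℕ)) :=
  (A ×ˢ B).filter (fun s => (s.1.1, s.2.1) = sc)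

lemma blockF_eq (A B : Finset (ℕ × ℕ)) (sc : ℕ × ℕ) :
    blockF A B sc = (A.filter (fun p => p.1 = sc.1)) ×ˢ (B.filter (fun p => p.1 = sc.2)) := by
  rw [blockF, ← Finset.filter_product]
  exact Finset.filter_congr fun s _ => by simp [Prod.ext_iff]

lemma blockF_card {A B : Finset (ℕ × ℕ)}
    (hcA : ∀ i, (A.filter (fun p => p.1 = i)).card ≤ 2)
    (hcB : ∀ i, (B.filter (fun p => p.1 = i)).card ≤ 2) (sc : ℕ × ℕ) :
    (blockF A B sc).card ≤ 4 := by
  rw [blockF_eq, Finset.card_product]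
  exact le_trans (Nat.mul_le_mul (hcA sc.1) (hcB sc.2)) (by norm_num)

lemma mem_blockF {A B : Finset (ℕ × ℕ)} {sc : ℕ × ℕ} {s : (ℕ × ℕ) × (ℕ × ℕ)} :
    s ∈ blockF A B sc ↔ s.1 ∈ A ∧ s.2 ∈ B ∧ s.1.1 = sc.1 ∧ s.2.1 = sc.2 := by
  simp [blockF, Finset.mem_filter, Finset.mem_product, Prod.ext_iff, and_assoc]

/-- The index map is injective on a scale block. -/
lemma blockF_injOn {A B : Finset (ℕ × ℕ)} {sc : ℕ × ℕ} :
    Set.InjOn (fun s : (ℕ × ℕ) × (ℕ × ℕ) => (s.1.2, s.2.2)) ↑(blockF A B sc) := by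
  intro s hs s' hs' h
  rw [Finset.mem_coe, mem_blockF] at hs hs'
  obtain ⟨_, _, e1, e2⟩ := hs
  obtain ⟨_, _, e1', e2'⟩ := hs'
  simp only [Prod.mk.injEq] at h
  exact Prod.ext (Prod.ext (e1.trans e1'.symm) h.1) (Prod.ext (e2.trans e2'.symm) h.2)

lemma blockF_sum_eq {A B : Finset (ℕ × ℕ)} {sc : ℕ × ℕ} (f : ℕ × ℕ → ℝ≥0∞) :
    ∑ s ∈ blockF A B sc, f (s.1.2, s.2.2) =
      ∑ q ∈ (blockF A B sc).image (fun s => (s.1.2, s.2.2)), f q :=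
  (Finset.sum_image fun x hx y hy h => blockF_injOn hx hy h).symm

lemma blockG_subset {A B : Finset (ℕ × ℕ)} {sc : ℕ × ℕ}
    (hA : ∀ p ∈ A, 1 ≤ p.2 ∧ 2 ^ p.1 * p.2 ≤ K)
    (hB : ∀ p ∈ B, 1 ≤ p.2 ∧ 2 ^ p.1 * p.2 ≤ K) :
    (blockF A B sc).image (fun s => (s.1.2, s.2.2)) ⊆
      Finset.Icc 1 (K / 2 ^ sc.1) ×ˢ Finset.Icc 1 (K / 2 ^ sc.2) := by
  intro q hq
  simp only [Finset.mem_image] at hq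
  obtain ⟨s, hs, rfl⟩ := hq
  rw [mem_blockF] at hs
  obtain ⟨h1, h2, e1, e2⟩ := hs
  have b1 := hA _ h1
  have b2 := hB _ h2
  rw [e1] at b1
  rw [e2] at b2
  simp only [Finset.mem_product, Finset.mem_Icc]
  have p1 : (0:ℕ) < 2 ^ sc.1 := Nat.pow_pos (by norm_num)
  have p2 : (0:ℕ) < 2 ^ sc.2 := Nat.pow_pos (by norm_num)
  exact ⟨⟨b1.1, (Nat.le_div_iff_mul_le p1).mpr (by linarith [b1.2])⟩,
    ⟨b2.1, (Nat.le_div_iff_mul_le p2).mpr (by linarith [b2.2])⟩⟩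

/-- On a scale block, the double difference is `vdd` of the index pair. -/
lemma dd_eq_vdd {A B : Finset (ℕ × ℕ)} {sc : ℕ × ℕ} {s : (ℕ × ℕ) × (ℕ × ℕ)}
    (hs : s ∈ blockF A B sc) :
    doubleDiff a (2 ^ s.1.1) s.1.2 (2 ^ s.2.1) s.2.2 = vdd a sc (s.1.2, s.2.2) := by
  rw [mem_blockF] at hs
  rw [vdd, hs.2.2.1, hs.2.2.2]

lemma Qterm_eq (hr : 0 < r) (i₁ i₂ : ℕ) :
    (if 2 ^ i₁ ≤ K ∧ 2 ^ i₂ ≤ K then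
      (∑ j₁ ∈ Finset.Icc 1 (K / 2 ^ i₁), ∑ j₂ ∈ Finset.Icc 1 (K / 2 ^ i₂),
        (‖doubleDiff a (2 ^ i₁) j₁ (2 ^ i₂) j₂‖₊ : ℝ≥0∞) ^ r) ^ (1 / r)
    else 0) = (Qsum r K a (i₁, i₂)) ^ (1 / r) := by
  have hq : Qsum r K a (i₁, i₂) = ∑ j₁ ∈ Finset.Icc 1 (K / 2 ^ i₁),
      ∑ j₂ ∈ Finset.Icc 1 (K / 2 ^ i₂),
      (‖doubleDiff a (2 ^ i₁) j₁ (2 ^ i₂) j₂‖₊ : ℝ≥0∞) ^ r := by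
    rw [Qsum, Finset.sum_product]
    rfl
  split
  · rw [hq]
  · rename_i hcond
    rw [hq]
    have hz : ∑ j₁ ∈ Finset.Icc 1 (K / 2 ^ i₁), ∑ j₂ ∈ Finset.Icc 1 (K / 2 ^ i₂),
        (‖doubleDiff a (2 ^ i₁) j₁ (2 ^ i₂) j₂‖₊ : ℝ≥0∞) ^ r = 0 := by
      rcases not_and_or.mp hcond with h | h
      · have : K / 2 ^ i₁ = 0 := Nat.div_eq_of_lt (by omega)
        rw [this]
        simp
      · have : K / 2 ^ i₂ = 0 := Nat.div_eq_of_lt (by omega)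
        rw [this]
        simp
    rw [hz, ENNReal.zero_rpow_of_pos (by positivity)]

lemma dyadic_scale_lt {t t' i j : ℕ} (h : (i, j) ∈ dyadic t t') (hK : t' ≤ K) : i < K + 1 := by
  obtain ⟨hj, _, hu⟩ := dyadic_mem t' t i j h
  have h1 : 2 ^ i ≤ 2 ^ i * j := Nat.le_mul_of_pos_right _ (by omega)
  have h2 : i < 2 ^ i := Nat.lt_two_pow_self
  omega

lemma dyadic_not_mem_both {i j t₁ t₂ s₁ s₂ : ℕ} (h1 : (i, j) ∈ dyadic t₁ t₂)
    (h2 : (i, j) ∈ dyadic s₁ s₂) (hle : t₂ ≤ s₁) : False := by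
  obtain ⟨hj, _, hu⟩ := dyadic_mem t₂ t₁ i j h1
  obtain ⟨_, hl, _⟩ := dyadic_mem s₂ s₁ i j h2
  have hp : 0 < 2 ^ i := Nat.pow_pos (by norm_num)
  have hm : 2 ^ i * j ≤ 2 ^ i * (j - 1) := le_trans hu (le_trans hle hl)
  have := Nat.le_of_mul_le_mul_left hm hp
  omega

lemma mem_blockG {A B : Finset (ℕ × ℕ)} {sc q : ℕ × ℕ}
    (hq : q ∈ (blockF A B sc).image (fun s => (s.1.2, s.2.2))) :
    (sc.1, q.1) ∈ A ∧ (sc.2, q.2) ∈ B := by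
  simp only [Finset.mem_image] at hq
  obtain ⟨s, hs, rfl⟩ := hq
  rw [mem_blockF] at hs
  obtain ⟨h1, h2, e1, e2⟩ := hs
  constructor
  · have : s.1 = (sc.1, s.1.2) := Prod.ext e1 rfl
    rwa [this] at h1
  · have : s.2 = (sc.2, s.2.2) := Prod.ext e2 rfl
    rwa [this] at h2

lemma pairwise_sum_le {J : ℕ} (G : Fin J → Finset (ℕ × ℕ)) (Q : Finset (ℕ × ℕ))
    (hdis : ∀ j j', j ≠ j' → Disjoint (G j) (G j')) (hsub : ∀ j, G j ⊆ Q)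
    (f : ℕ × ℕ → ℝ≥0∞) :
    ∑ j : Fin J, ∑ q ∈ G j, f q ≤ ∑ q ∈ Q, f q := by
  classical
  rw [← Finset.sum_biUnion (fun x _ y _ h => hdis x y h)]
  exact Finset.sum_le_sum_of_subset (Finset.biUnion_subset.mpr fun j _ => hsub j)

/-- The fundamental 2D telescoping identity over dyadic rectangles. -/
lemma step_eq (ha1 : ∀ k, a 0 k = 0) (ha2 : ∀ k, a k 0 = 0) {u u' : ℕ} (h : u ≤ u') :
    a u' u' - a u u =
      (∑ s ∈ (dyadic u u') ×ˢ (dyadic 0 u'),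
        doubleDiff a (2 ^ s.1.1) s.1.2 (2 ^ s.2.1) s.2.2) +
      (∑ s ∈ (dyadic 0 u) ×ˢ (dyadic u u'),
        doubleDiff a (2 ^ s.1.1) s.1.2 (2 ^ s.2.1) s.2.2) := by
  rw [Finset.sum_product, Finset.sum_product]
  have key : ∀ (p : ℕ × ℕ) (v v' : ℕ), v ≤ v' →
      ∑ q ∈ dyadic v v', doubleDiff a (2 ^ p.1) p.2 (2 ^ q.1) q.2 =
        (a (2 ^ p.1 * p.2) v' - a (2 ^ p.1 * (p.2 - 1)) v') -
        (a (2 ^ p.1 * p.2) v - a (2 ^ p.1 * (p.2 - 1)) v) := by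
    intro p v v' hv
    have := dyadic_sum v' v hv
      (fun x => a (2 ^ p.1 * p.2) x - a (2 ^ p.1 * (p.2 - 1)) x)
    rw [← this]
    refine Finset.sum_congr rfl fun q _ => ?_
    rw [doubleDiff]
    ring
  have e1 : ∑ p ∈ dyadic u u', ∑ q ∈ dyadic 0 u',
      doubleDiff a (2 ^ p.1) p.2 (2 ^ q.1) q.2 = a u' u' - a u u' := by
    have : ∀ p ∈ dyadic u u', ∑ q ∈ dyadic 0 u',
        doubleDiff a (2 ^ p.1) p.2 (2 ^ q.1) q.2 =
        a (2 ^ p.1 * p.2) u' - a (2 ^ p.1 * (p.2 - 1)) u' := by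
      intro p _
      rw [key p 0 u' (Nat.zero_le _), ha2, ha2]
      ring
    rw [Finset.sum_congr rfl this, dyadic_sum u' u h (fun x => a x u')]
  have e2 : ∑ p ∈ dyadic 0 u, ∑ q ∈ dyadic u u',
      doubleDiff a (2 ^ p.1) p.2 (2 ^ q.1) q.2 = a u u' - a u u := by
    have : ∀ p ∈ dyadic 0 u, ∑ q ∈ dyadic u u',
        doubleDiff a (2 ^ p.1) p.2 (2 ^ q.1) q.2 =
        (a (2 ^ p.1 * p.2) u' - a (2 ^ p.1 * (p.2 - 1)) u') -
        (a (2 ^ p.1 * p.2) u - a (2 ^ p.1 * (p.2 - 1)) u) := fun p _ => key p u u' h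
    rw [Finset.sum_congr rfl this, Finset.sum_sub_distrib,
      dyadic_sum u 0 (Nat.zero_le _) (fun x => a x u'),
      dyadic_sum u 0 (Nat.zero_le _) (fun x => a x u), ha1, ha1]
    ring
  rw [e1, e2]
  ring

/-- Decomposition of a sum over a product of dyadic families into scale blocks. -/
lemma sum_fiber {M : Type*} [AddCommMonoid M] (A B : Finset (ℕ × ℕ))
    (hP : ∀ s ∈ A ×ˢ B, s.1.1 < K + 1 ∧ s.2.1 < K + 1)
    (f : (ℕ × ℕ) × (ℕ × ℕ) → M) :
    ∑ s ∈ A ×ˢ B, f s =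
      ∑ sc ∈ Finset.range (K + 1) ×ˢ Finset.range (K + 1), ∑ s ∈ blockF A B sc, f s := by
  classical
  unfold blockF
  have hmaps : ∀ s ∈ A ×ˢ B, (fun s : (ℕ × ℕ) × (ℕ × ℕ) => (s.1.1, s.2.1)) s ∈
      Finset.range (K + 1) ×ˢ Finset.range (K + 1) := fun s hs => by
    simp only [Finset.mem_product, Finset.mem_range]
    exact hP s hs
  rw [← Finset.sum_fiberwise_of_maps_to hmaps f]

/-- One scale block: `ℓ^1` bound. -/
lemma blockF_norm_sum_le (hr : 0 < r) {A B : Finset (ℕ × ℕ)}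
    (hA : ∀ p ∈ A, 1 ≤ p.2 ∧ 2 ^ p.1 * p.2 ≤ K)
    (hB : ∀ p ∈ B, 1 ≤ p.2 ∧ 2 ^ p.1 * p.2 ≤ K)
    (hcA : ∀ i, (A.filter (fun p => p.1 = i)).card ≤ 2)
    (hcB : ∀ i, (B.filter (fun p => p.1 = i)).card ≤ 2) (sc : ℕ × ℕ) :
    ∑ s ∈ blockF A B sc, (‖doubleDiff a (2 ^ s.1.1) s.1.2 (2 ^ s.2.1) s.2.2‖₊ : ℝ≥0∞)
      ≤ 4 * (Qsum r K a sc) ^ (1 / r) := by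
  have e0 : ∑ s ∈ blockF A B sc,
      (‖doubleDiff a (2 ^ s.1.1) s.1.2 (2 ^ s.2.1) s.2.2‖₊ : ℝ≥0∞) =
      ∑ q ∈ (blockF A B sc).image (fun s => (s.1.2, s.2.2)), (‖vdd a sc q‖₊ : ℝ≥0∞) := by
    rw [← blockF_sum_eq (f := fun q => (‖vdd a sc q‖₊ : ℝ≥0∞))]
    exact Finset.sum_congr rfl fun s hs => by rw [dd_eq_vdd a hs]
  rw [e0]
  set G := (blockF A B sc).image (fun s => (s.1.2, s.2.2)) with hG
  calc ∑ q ∈ G, (‖vdd a sc q‖₊ : ℝ≥0∞)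
      ≤ (G.card : ℝ≥0∞) * (∑ q ∈ G, (‖vdd a sc q‖₊ : ℝ≥0∞) ^ r) ^ (1 / r) :=
        sum_le_card_mul_lpnorm hr G _
    _ ≤ 4 * (Qsum r K a sc) ^ (1 / r) := by
        refine mul_le_mul' ?_ ?_
        · have h1 : G.card ≤ 4 :=
            le_trans (Finset.card_image_le) (blockF_card hcA hcB sc)
          exact_mod_cast (by exact_mod_cast h1 : (G.card : ℝ≥0∞) ≤ (4 : ℕ))
        · refine ENNReal.rpow_le_rpow ?_ (by positivity)
          rw [Qsum]
          exact Finset.sum_le_sum_of_subset (blockG_subset K hA hB)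

lemma blockF_conv (g : ℂ → ℝ≥0∞) {A B : Finset (ℕ × ℕ)} {sc : ℕ × ℕ} :
    ∑ s ∈ blockF A B sc, g (doubleDiff a (2 ^ s.1.1) s.1.2 (2 ^ s.2.1) s.2.2) =
      ∑ q ∈ (blockF A B sc).image (fun s => (s.1.2, s.2.2)), g (vdd a sc q) := by
  rw [← blockF_sum_eq (f := fun q => g (vdd a sc q))]
  exact Finset.sum_congr rfl fun s hs => by rw [dd_eq_vdd a hs]

/-- The `ℓ^r` (over steps) bound for a fixed scale pair. -/
lemma lp_block_bound (hr : 0 < r) {J : ℕ} (A B : Fin J → Finset (ℕ × ℕ)) (sc : ℕ × ℕ)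
    (hA : ∀ j, ∀ p ∈ A j, 1 ≤ p.2 ∧ 2 ^ p.1 * p.2 ≤ K)
    (hB : ∀ j, ∀ p ∈ B j, 1 ≤ p.2 ∧ 2 ^ p.1 * p.2 ≤ K)
    (hcA : ∀ j i, ((A j).filter (fun p => p.1 = i)).card ≤ 2)
    (hcB : ∀ j i, ((B j).filter (fun p => p.1 = i)).card ≤ 2)
    (hdis : ∀ j j', j ≠ j' →
      Disjoint ((blockF (A j) (B j) sc).image (fun s => (s.1.2, s.2.2)))
        ((blockF (A j') (B j') sc).image (fun s => (s.1.2, s.2.2)))) :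
    (∑ j : Fin J, (∑ s ∈ blockF (A j) (B j) sc,
        (‖doubleDiff a (2 ^ s.1.1) s.1.2 (2 ^ s.2.1) s.2.2‖₊ : ℝ≥0∞)) ^ r) ^ (1 / r)
      ≤ 4 * (Qsum r K a sc) ^ (1 / r) := by
  set G : Fin J → Finset (ℕ × ℕ) :=
    fun j => (blockF (A j) (B j) sc).image (fun s => (s.1.2, s.2.2)) with hGdef
  have per_j : ∀ j : Fin J, (∑ s ∈ blockF (A j) (B j) sc,
      (‖doubleDiff a (2 ^ s.1.1) s.1.2 (2 ^ s.2.1) s.2.2‖₊ : ℝ≥0∞)) ^ r ≤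
      (4 : ℝ≥0∞) ^ r * ∑ q ∈ G j, (‖vdd a sc q‖₊ : ℝ≥0∞) ^ r := by
    intro j
    rw [blockF_conv a (fun z => (‖z‖₊ : ℝ≥0∞))]
    have h1 : ∑ q ∈ G j, (‖vdd a sc q‖₊ : ℝ≥0∞) ≤
        (4 : ℝ≥0∞) * (∑ q ∈ G j, (‖vdd a sc q‖₊ : ℝ≥0∞) ^ r) ^ (1 / r) := by
      refine le_trans (sum_le_card_mul_lpnorm hr (G j) _) (mul_le_mul' ?_ le_rfl)
      have hc : (G j).card ≤ 4 :=
        le_trans (Finset.card_image_le) (blockF_card (hcA j) (hcB j) sc)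
      exact_mod_cast (by exact_mod_cast hc : ((G j).card : ℝ≥0∞) ≤ (4 : ℕ))
    calc (∑ q ∈ G j, (‖vdd a sc q‖₊ : ℝ≥0∞)) ^ r
        ≤ ((4 : ℝ≥0∞) * (∑ q ∈ G j, (‖vdd a sc q‖₊ : ℝ≥0∞) ^ r) ^ (1 / r)) ^ r :=
          ENNReal.rpow_le_rpow h1 hr.le
      _ = (4 : ℝ≥0∞) ^ r * ∑ q ∈ G j, (‖vdd a sc q‖₊ : ℝ≥0∞) ^ r := by
          rw [ENNReal.mul_rpow_of_nonneg _ _ hr.le, rpow_inv_rpow' hr]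
  calc (∑ j : Fin J, (∑ s ∈ blockF (A j) (B j) sc,
        (‖doubleDiff a (2 ^ s.1.1) s.1.2 (2 ^ s.2.1) s.2.2‖₊ : ℝ≥0∞)) ^ r) ^ (1 / r)
      ≤ ((4 : ℝ≥0∞) ^ r * ∑ j : Fin J, ∑ q ∈ G j, (‖vdd a sc q‖₊ : ℝ≥0∞) ^ r) ^ (1 / r) := by
        refine ENNReal.rpow_le_rpow ?_ (by positivity)
        rw [Finset.mul_sum]
        exact Finset.sum_le_sum fun j _ => per_j j
    _ ≤ ((4 : ℝ≥0∞) ^ r * Qsum r K a sc) ^ (1 / r) := by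
        refine ENNReal.rpow_le_rpow (mul_le_mul' le_rfl ?_) (by positivity)
        rw [Qsum]
        exact pairwise_sum_le G _ hdis
          (fun j => blockG_subset K (hA j) (hB j)) _
    _ = 4 * (Qsum r K a sc) ^ (1 / r) := by
        rw [ENNReal.mul_rpow_of_nonneg _ _ (by positivity : (0:ℝ) ≤ 1 / r),
          rpow_rpow_inv hr]

/-- Key estimate: the `ℓ^r` sum of diagonal increments along any monotone sequence of
times `≤ K` is controlled by the sum over scale pairs. -/
lemma key (hr : 1 < r) (ha1 : ∀ k, a 0 k = 0) (ha2 : ∀ k, a k 0 = 0) {J : ℕ}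
    (u : Fin (J + 1) → ℕ) (hmono : Monotone u) (huK : ∀ j, u j ≤ K) :
    (∑ j : Fin J, (‖a (u j.succ) (u j.succ) -
        a (u j.castSucc) (u j.castSucc)‖₊ : ℝ≥0∞) ^ r) ^ (1 / r)
      ≤ ∑ sc ∈ Finset.range (K + 1) ×ˢ Finset.range (K + 1),
          8 * (Qsum r K a sc) ^ (1 / r) := by
  have hr0 : (0 : ℝ) < r := lt_trans zero_lt_one hr
  set T := Finset.range (K + 1) ×ˢ Finset.range (K + 1) with hT
  set A1 : Fin J → Finset (ℕ × ℕ) := fun j => dyadic (u j.castSucc) (u j.succ) with hA1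
  set B1 : Fin J → Finset (ℕ × ℕ) := fun j => dyadic 0 (u j.succ) with hB1
  set A2 : Fin J → Finset (ℕ × ℕ) := fun j => dyadic 0 (u j.castSucc) with hA2
  set B2 : Fin J → Finset (ℕ × ℕ) := fun j => dyadic (u j.castSucc) (u j.succ) with hB2
  have hmemD : ∀ (x y : ℕ), y ≤ K → ∀ p ∈ dyadic x y, 1 ≤ p.2 ∧ 2 ^ p.1 * p.2 ≤ K := by
    intro x y hy p hp
    obtain ⟨h1, _, h3⟩ := dyadic_mem y x p.1 p.2 (by simpa using hp)
    exact ⟨h1, le_trans h3 hy⟩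
  have hstep : ∀ j : Fin J, u j.castSucc ≤ u j.succ :=
    fun j => hmono (Fin.castSucc_le_succ j)
  -- step 1: pointwise decomposition
  have step1 : ∀ j : Fin J, (‖a (u j.succ) (u j.succ) -
      a (u j.castSucc) (u j.castSucc)‖₊ : ℝ≥0∞) ≤
      ∑ sc ∈ T, ((∑ s ∈ blockF (A1 j) (B1 j) sc,
          (‖doubleDiff a (2 ^ s.1.1) s.1.2 (2 ^ s.2.1) s.2.2‖₊ : ℝ≥0∞)) +
        (∑ s ∈ blockF (A2 j) (B2 j) sc,
          (‖doubleDiff a (2 ^ s.1.1) s.1.2 (2 ^ s.2.1) s.2.2‖₊ : ℝ≥0∞))) := by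
    intro j
    rw [step_eq a ha1 ha2 (hstep j)]
    have hsc1 : ∀ s ∈ (A1 j) ×ˢ (B1 j), s.1.1 < K + 1 ∧ s.2.1 < K + 1 := by
      intro s hs
      rw [Finset.mem_product] at hs
      exact ⟨dyadic_scale_lt K (by simpa using hs.1) (huK _),
        dyadic_scale_lt K (by simpa using hs.2) (huK _)⟩
    have hsc2 : ∀ s ∈ (A2 j) ×ˢ (B2 j), s.1.1 < K + 1 ∧ s.2.1 < K + 1 := by
      intro s hs
      rw [Finset.mem_product] at hs
      exact ⟨dyadic_scale_lt K (by simpa using hs.1) (huK _),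
        dyadic_scale_lt K (by simpa using hs.2) (huK _)⟩
    calc (‖(∑ s ∈ (A1 j) ×ˢ (B1 j), doubleDiff a (2 ^ s.1.1) s.1.2 (2 ^ s.2.1) s.2.2) +
          (∑ s ∈ (A2 j) ×ˢ (B2 j), doubleDiff a (2 ^ s.1.1) s.1.2 (2 ^ s.2.1) s.2.2)‖₊ : ℝ≥0∞)
        ≤ (∑ s ∈ (A1 j) ×ˢ (B1 j),
            (‖doubleDiff a (2 ^ s.1.1) s.1.2 (2 ^ s.2.1) s.2.2‖₊ : ℝ≥0∞)) +
          (∑ s ∈ (A2 j) ×ˢ (B2 j),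
            (‖doubleDiff a (2 ^ s.1.1) s.1.2 (2 ^ s.2.1) s.2.2‖₊ : ℝ≥0∞)) := by
          have n2 : (‖∑ s ∈ (A1 j) ×ˢ (B1 j),
              doubleDiff a (2 ^ s.1.1) s.1.2 (2 ^ s.2.1) s.2.2‖₊ : ℝ≥0∞) ≤
              ∑ s ∈ (A1 j) ×ˢ (B1 j),
                (‖doubleDiff a (2 ^ s.1.1) s.1.2 (2 ^ s.2.1) s.2.2‖₊ : ℝ≥0∞) := by
            rw [← ENNReal.coe_finset_sum]
            exact_mod_cast nnnorm_sum_le _ _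
          have n3 : (‖∑ s ∈ (A2 j) ×ˢ (B2 j),
              doubleDiff a (2 ^ s.1.1) s.1.2 (2 ^ s.2.1) s.2.2‖₊ : ℝ≥0∞) ≤
              ∑ s ∈ (A2 j) ×ˢ (B2 j),
                (‖doubleDiff a (2 ^ s.1.1) s.1.2 (2 ^ s.2.1) s.2.2‖₊ : ℝ≥0∞) := by
            rw [← ENNReal.coe_finset_sum]
            exact_mod_cast nnnorm_sum_le _ _
          refine le_trans ?_ (add_le_add n2 n3)
          exact_mod_cast nnnorm_add_le _ _
      _ = _ := by
          rw [sum_fiber K (A1 j) (B1 j) hsc1, sum_fiber K (A2 j) (B2 j) hsc2,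
            ← Finset.sum_add_distrib]
  -- disjointness of index blocks across steps
  have hdis1 : ∀ sc : ℕ × ℕ, ∀ j j' : Fin J, j ≠ j' →
      Disjoint ((blockF (A1 j) (B1 j) sc).image (fun s => (s.1.2, s.2.2)))
        ((blockF (A1 j') (B1 j') sc).image (fun s => (s.1.2, s.2.2))) := by
    intro sc j j' hne
    rw [Finset.disjoint_left]
    intro q hq hq'
    have m1 := (mem_blockG hq).1
    have m2 := (mem_blockG hq').1
    rcases Ne.lt_or_gt hne with h | h
    · exact dyadic_not_mem_both m1 m2
        (hmono (show j.succ ≤ j'.castSucc by rw [Fin.le_def]; simp; omega))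
    · exact dyadic_not_mem_both m2 m1
        (hmono (show j'.succ ≤ j.castSucc by rw [Fin.le_def]; simp; omega))
  have hdis2 : ∀ sc : ℕ × ℕ, ∀ j j' : Fin J, j ≠ j' →
      Disjoint ((blockF (A2 j) (B2 j) sc).image (fun s => (s.1.2, s.2.2)))
        ((blockF (A2 j') (B2 j') sc).image (fun s => (s.1.2, s.2.2))) := by
    intro sc j j' hne
    rw [Finset.disjoint_left]
    intro q hq hq'
    have m1 := (mem_blockG hq).2
    have m2 := (mem_blockG hq').2
    rcases Ne.lt_or_gt hne with h | h
    · exact dyadic_not_mem_both m1 m2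
        (hmono (show j.succ ≤ j'.castSucc by rw [Fin.le_def]; simp; omega))
    · exact dyadic_not_mem_both m2 m1
        (hmono (show j'.succ ≤ j.castSucc by rw [Fin.le_def]; simp; omega))
  calc (∑ j : Fin J, (‖a (u j.succ) (u j.succ) -
        a (u j.castSucc) (u j.castSucc)‖₊ : ℝ≥0∞) ^ r) ^ (1 / r)
      ≤ (∑ j : Fin J, (∑ sc ∈ T, ((∑ s ∈ blockF (A1 j) (B1 j) sc,
            (‖doubleDiff a (2 ^ s.1.1) s.1.2 (2 ^ s.2.1) s.2.2‖₊ : ℝ≥0∞)) +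
          (∑ s ∈ blockF (A2 j) (B2 j) sc,
            (‖doubleDiff a (2 ^ s.1.1) s.1.2 (2 ^ s.2.1) s.2.2‖₊ : ℝ≥0∞)))) ^ r) ^ (1 / r) := by
        refine ENNReal.rpow_le_rpow (Finset.sum_le_sum fun j _ =>
          ENNReal.rpow_le_rpow (step1 j) hr0.le) (by positivity)
    _ ≤ ∑ sc ∈ T, (∑ j : Fin J, ((∑ s ∈ blockF (A1 j) (B1 j) sc,
            (‖doubleDiff a (2 ^ s.1.1) s.1.2 (2 ^ s.2.1) s.2.2‖₊ : ℝ≥0∞)) +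
          (∑ s ∈ blockF (A2 j) (B2 j) sc,
            (‖doubleDiff a (2 ^ s.1.1) s.1.2 (2 ^ s.2.1) s.2.2‖₊ : ℝ≥0∞))) ^ r) ^ (1 / r) :=
        minkowski_finset hr.le T _
    _ ≤ ∑ sc ∈ T, 8 * (Qsum r K a sc) ^ (1 / r) := by
        refine Finset.sum_le_sum fun sc _ => ?_
        calc (∑ j : Fin J, ((∑ s ∈ blockF (A1 j) (B1 j) sc,
              (‖doubleDiff a (2 ^ s.1.1) s.1.2 (2 ^ s.2.1) s.2.2‖₊ : ℝ≥0∞)) +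
            (∑ s ∈ blockF (A2 j) (B2 j) sc,
              (‖doubleDiff a (2 ^ s.1.1) s.1.2 (2 ^ s.2.1) s.2.2‖₊ : ℝ≥0∞))) ^ r) ^ (1 / r)
            ≤ (∑ j : Fin J, (∑ s ∈ blockF (A1 j) (B1 j) sc,
                (‖doubleDiff a (2 ^ s.1.1) s.1.2 (2 ^ s.2.1) s.2.2‖₊ : ℝ≥0∞)) ^ r) ^ (1 / r) +
              (∑ j : Fin J, (∑ s ∈ blockF (A2 j) (B2 j) sc,
                (‖doubleDiff a (2 ^ s.1.1) s.1.2 (2 ^ s.2.1) s.2.2‖₊ : ℝ≥0∞)) ^ r) ^ (1 / r) :=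
              ENNReal.Lp_add_le _ _ _ hr.le
          _ ≤ 4 * (Qsum r K a sc) ^ (1 / r) + 4 * (Qsum r K a sc) ^ (1 / r) := by
              refine add_le_add ?_ ?_
              · exact lp_block_bound r K a hr0 A1 B1 sc
                  (fun j => hmemD _ _ (huK _)) (fun j => hmemD _ _ (huK _))
                  (fun j i => dyadic_card _ _ i) (fun j i => dyadic_card _ _ i)
                  (hdis1 sc)
              · exact lp_block_bound r K a hr0 A2 B2 sc
                  (fun j => hmemD _ _ (huK _)) (fun j => hmemD _ _ (huK _))
                  (fun j i => dyadic_card _ _ i) (fun j i => dyadic_card _ _ i)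
                  (hdis2 sc)
          _ = 8 * (Qsum r K a sc) ^ (1 / r) := by
              rw [← add_mul]
              norm_num

end Main
/-- Two-dimensional Rademacher–Menshov inequality: with the convention
`a_{k₁,k₂} = 0` when `k₁ = 0` or `k₂ = 0`, for `1 < r < ∞`,
`‖(a_{k,k})_{k∈[K]}‖_{V^r} ≲_r
  Σ_{M₁,M₂ dyadic ≤ K} ‖(Δa_{M₁j₁,M₂j₂})_{(j₁,j₂)∈[K/M₁]×[K/M₂]}‖_{ℓ^r}`. -/
theorem stmt3 (r : ℝ) (hr : 1 < r) :
    ∃ C : ℝ≥0∞, 0 < C ∧ C ≠ ⊤ ∧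
      ∀ (K : ℕ), 0 < K → ∀ (a : ℕ → ℕ → ℂ),
        (∀ k, a 0 k = 0) → (∀ k, a k 0 = 0) →
        vNorm r (fun k : Fin K => a ((k : ℕ) + 1) ((k : ℕ) + 1)) ≤
          C * ∑ i₁ ∈ Finset.range (K + 1), ∑ i₂ ∈ Finset.range (K + 1),
            (if 2 ^ i₁ ≤ K ∧ 2 ^ i₂ ≤ K then
              (∑ j₁ ∈ Finset.Icc 1 (K / 2 ^ i₁), ∑ j₂ ∈ Finset.Icc 1 (K / 2 ^ i₂),
                (‖doubleDiff a (2 ^ i₁) j₁ (2 ^ i₂) j₂‖₊ : ℝ≥0∞) ^ r) ^ (1 / r)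
            else 0) := by
  have hr0 : (0 : ℝ) < r := lt_trans zero_lt_one hr
  refine ⟨16, by norm_num, by norm_num, ?_⟩
  intro K hK a ha1 ha2
  have hRHS : ∑ i₁ ∈ Finset.range (K + 1), ∑ i₂ ∈ Finset.range (K + 1),
      (if 2 ^ i₁ ≤ K ∧ 2 ^ i₂ ≤ K then
        (∑ j₁ ∈ Finset.Icc 1 (K / 2 ^ i₁), ∑ j₂ ∈ Finset.Icc 1 (K / 2 ^ i₂),
          (‖doubleDiff a (2 ^ i₁) j₁ (2 ^ i₂) j₂‖₊ : ℝ≥0∞) ^ r) ^ (1 / r)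
      else 0) =
      ∑ sc ∈ Finset.range (K + 1) ×ˢ Finset.range (K + 1), (Qsum r K a sc) ^ (1 / r) := by
    rw [Finset.sum_product]
    exact Finset.sum_congr rfl fun i₁ _ => Finset.sum_congr rfl fun i₂ _ =>
      Qterm_eq r K a hr0 i₁ i₂
  rw [hRHS]
  set R := ∑ sc ∈ Finset.range (K + 1) ×ˢ Finset.range (K + 1), (Qsum r K a sc) ^ (1 / r)
    with hR
  have hkey8 : ∑ sc ∈ Finset.range (K + 1) ×ˢ Finset.range (K + 1),
      8 * (Qsum r K a sc) ^ (1 / r) = 8 * R := by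
    rw [hR, Finset.mul_sum]
  have hsemi : vSeminorm r (fun k : Fin K => a ((k : ℕ) + 1) ((k : ℕ) + 1)) ≤ 8 * R := by
    rw [vSeminorm]
    refine iSup_le fun J => iSup_le fun t => iSup_le fun ht => ?_
    have hm : Monotone (fun jj : Fin (J + 1) => (t jj : ℕ) + 1) := by
      intro x y h
      have := ht h
      rw [Fin.le_def] at this
      show (t x : ℕ) + 1 ≤ (t y : ℕ) + 1
      omega
    have hb : ∀ jj : Fin (J + 1), (t jj : ℕ) + 1 ≤ K := fun jj => (t jj).isLt
    have := key r K a hr ha1 ha2 (fun jj => (t jj : ℕ) + 1) hm hb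
    rw [hkey8] at this
    exact this
  have hsup : (⨆ tt : Fin K,
      (‖(fun k : Fin K => a ((k : ℕ) + 1) ((k : ℕ) + 1)) tt‖₊ : ℝ≥0∞)) ≤ 8 * R := by
    refine iSup_le fun tt => ?_
    have hm : Monotone (fun j : Fin 2 => (j : ℕ) * ((tt : ℕ) + 1)) := by
      intro x y h
      rw [Fin.le_def] at h
      exact Nat.mul_le_mul_right _ h
    have hb : ∀ j : Fin 2, (j : ℕ) * ((tt : ℕ) + 1) ≤ K := by
      intro j
      have h1 : (j : ℕ) ≤ 1 := by omega
      have h2 := tt.isLt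
      calc (j : ℕ) * ((tt : ℕ) + 1) ≤ 1 * ((tt : ℕ) + 1) := Nat.mul_le_mul_right _ h1
        _ ≤ K := by omega
    have hkey := key r K a hr ha1 ha2 (fun j : Fin 2 => (j : ℕ) * ((tt : ℕ) + 1)) hm hb
    rw [hkey8] at hkey
    refine le_trans (le_of_eq ?_) hkey
    rw [Fin.sum_univ_one]
    simp only [Fin.succ_zero_eq_one, Fin.castSucc_zero, Fin.val_one, Fin.val_zero, one_mul,
      zero_mul, ha1 0, sub_zero]
    rw [rpow_rpow_inv hr0]
  rw [vNorm]
  calc (⨆ tt : Fin K, (‖(fun k : Fin K => a ((k : ℕ) + 1) ((k : ℕ) + 1)) tt‖₊ : ℝ≥0∞)) +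
        vSeminorm r (fun k : Fin K => a ((k : ℕ) + 1) ((k : ℕ) + 1))
      ≤ 8 * R + 8 * R := add_le_add hsup hsemi
    _ = 16 * R := by rw [← add_mul]; norm_num
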